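/- In the averaging iteration A_0 = A, B_0 = B, A_{k+1} = (A_k + B_k)/2, B_{k+1} = 2(A_k^{-1} + B_k^{-1})^{-1} for Hermitian positive definite A, B, the monotonicity A_k ≽ A_{k+1} ≽ A#B ≽ B_{k+1} ≽ B_k holds for all k ≥ 1, where ≽ is the Loewner order. -/

import Mathlib

open Matrix ComplexOrder

namespace Matrix.PosSemidef

/-- The positive semidefinite square root of a positive semidefinite matrix
(the definition Mathlib had, since removed). -/
noncomputable def sqrt {n : Type*} {𝕜 : Type*} [Fintype n] [RCLike 𝕜] [DecidableEq n]
    {A : Matrix n n 𝕜} (hA : A.PosSemidef) : Matrix n n 𝕜 :=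
  hA.1.eigenvectorUnitary.1 * diagonal ((↑) ∘ (√·) ∘ hA.1.eigenvalues) *
  (star hA.1.eigenvectorUnitary : Matrix n n 𝕜)

lemma posSemidef_sqrt {n : Type*} {𝕜 : Type*} [Fintype n] [RCLike 𝕜] [DecidableEq n]
    {A : Matrix n n 𝕜} (hA : A.PosSemidef) : PosSemidef hA.sqrt := by
  apply PosSemidef.mul_mul_conjTranspose_same
  refine posSemidef_diagonal_iff.mpr fun i ↦ ?_
  rw [Function.comp_apply, RCLike.nonneg_iff]
  constructor
  · simp only [RCLike.ofReal_re]
    exact Real.sqrt_nonneg _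
  · simp only [RCLike.ofReal_im]

lemma sqrt_mul_self {n : Type*} {𝕜 : Type*} [Fintype n] [RCLike 𝕜] [DecidableEq n]
    {A : Matrix n n 𝕜} (hA : A.PosSemidef) : hA.sqrt * hA.sqrt = A := by
  conv_rhs => rw [hA.1.spectral_theorem, Unitary.conjStarAlgAut_apply]
  unfold sqrt
  have hU : (star hA.1.eigenvectorUnitary : Matrix n n 𝕜) * hA.1.eigenvectorUnitary.1 = 1 :=
    Unitary.coe_star_mul_self _
  rw [show ∀ (U D V : Matrix n n 𝕜), U * D * V * (U * D * V) = U * (D * (V * U) * D) * V by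
    intro U D V; simp only [Matrix.mul_assoc], hU, Matrix.mul_one, diagonal_mul_diagonal]
  congr 3
  funext i
  simp only [Function.comp_apply, ← RCLike.ofReal_mul, Real.mul_self_sqrt (hA.eigenvalues_nonneg i)]

end Matrix.PosSemidef

lemma geomMean_aux {n : ℕ} {A B : Matrix (Fin n) (Fin n) ℂ} (hA : A.PosDef) (hB : B.PosDef) :
    ((hA.posSemidef.sqrt)⁻¹ * B * (hA.posSemidef.sqrt)⁻¹).PosSemidef := by
  have h := hB.posSemidef.conjTranspose_mul_mul_same (hA.posSemidef.sqrt)⁻¹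
  rwa [(hA.posSemidef.posSemidef_sqrt.isHermitian.inv).eq] at h

/-- The geometric mean `A # B = A^{1/2} (A^{-1/2} B A^{-1/2})^{1/2} A^{1/2}` of two
Hermitian positive definite matrices. -/
noncomputable def geomMean {n : ℕ} {A B : Matrix (Fin n) (Fin n) ℂ}
    (hA : A.PosDef) (hB : B.PosDef) : Matrix (Fin n) (Fin n) ℂ :=
  hA.posSemidef.sqrt * (geomMean_aux hA hB).sqrt * hA.posSemidef.sqrt

namespace AveragingAux

variable {n : ℕ} {M X Y A B G : Matrix (Fin n) (Fin n) ℂ}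

lemma conj_psd (hX : X.PosSemidef) (hM : M.IsHermitian) : (M * X * M).PosSemidef := by
  have h := hX.conjTranspose_mul_mul_same M
  rwa [hM.eq] at h

lemma pd_of_psd (hX : X.PosSemidef) (hd : IsUnit X.det) : X.PosDef := by
  exact hX.posDef_iff_isUnit.mpr ((Matrix.isUnit_iff_isUnit_det X).mpr hd)

lemma det_unit (hA : A.PosDef) : IsUnit A.det := isUnit_iff_ne_zero.mpr hA.det_pos.ne'

lemma conj_pd (hX : X.PosDef) (hM : M.IsHermitian) (hMd : IsUnit M.det) :
    (M * X * M).PosDef := by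
  refine pd_of_psd (conj_psd hX.posSemidef hM) ?_
  simp only [det_mul]
  exact (hMd.mul (det_unit hX)).mul hMd

lemma smul_psd {c : ℝ} (hc : 0 ≤ c) (hX : X.PosSemidef) : ((c : ℂ) • X).PosSemidef := by
  refine .of_dotProduct_mulVec_nonneg ?_ ?_
  · unfold Matrix.IsHermitian
    rw [conjTranspose_smul, hX.1.eq, Complex.star_def, Complex.conj_ofReal]
  · intro x
    rw [smul_mulVec, dotProduct_smul]
    exact mul_nonneg (by exact_mod_cast hc) (hX.dotProduct_mulVec_nonneg x)

lemma smul_pd {c : ℝ} (hc : 0 < c) (hX : X.PosDef) : ((c : ℂ) • X).PosDef := by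
  refine pd_of_psd (smul_psd hc.le hX.posSemidef) ?_
  rw [det_smul]
  refine IsUnit.mul ?_ (det_unit hX)
  simp only [isUnit_iff_ne_zero]
  positivity

lemma half_eq : (2 : ℂ)⁻¹ = (((2 : ℝ)⁻¹ : ℝ) : ℂ) := by norm_num
lemma two_eq : (2 : ℂ) = ((2 : ℝ) : ℂ) := by norm_num

lemma sqrt_herm (hA : A.PosDef) : hA.posSemidef.sqrt.IsHermitian :=
  hA.posSemidef.posSemidef_sqrt.isHermitian

lemma sqrt_det (hA : A.PosDef) : IsUnit hA.posSemidef.sqrt.det := by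
  have h : hA.posSemidef.sqrt.det * hA.posSemidef.sqrt.det = A.det := by
    rw [← det_mul, hA.posSemidef.sqrt_mul_self]
  exact isUnit_iff_ne_zero.mpr fun h0 => hA.det_pos.ne' (by rw [← h, h0, mul_zero])

lemma sqrt_pd (hA : A.PosDef) : hA.posSemidef.sqrt.PosDef :=
  pd_of_psd hA.posSemidef.posSemidef_sqrt (sqrt_det hA)

lemma sqrt_inv_mul_sqrt_inv (hA : A.PosDef) :
    (hA.posSemidef.sqrt)⁻¹ * (hA.posSemidef.sqrt)⁻¹ = A⁻¹ := by
  rw [← Matrix.mul_inv_rev, hA.posSemidef.sqrt_mul_self]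

lemma sqrt_inv_conj_one (hA : A.PosDef) :
    (hA.posSemidef.sqrt)⁻¹ * A * (hA.posSemidef.sqrt)⁻¹ = 1 := by
  set R := hA.posSemidef.sqrt with hR
  rw [← hA.posSemidef.sqrt_mul_self, ← hR,
    show R⁻¹ * (R * R) * R⁻¹ = (R⁻¹ * R) * (R * R⁻¹) by noncomm_ring,
    nonsing_inv_mul R (sqrt_det hA), mul_nonsing_inv R (sqrt_det hA), one_mul]

/-- AM dominates any PD solution of the Riccati equation. -/
lemma am_sub_psd (hA : A.PosDef) (hB : B.PosDef) (hG : G.PosDef)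
    (hric : G * A⁻¹ * G = B) : ((2 : ℂ)⁻¹ • (A + B) - G).PosSemidef := by
  set R := hA.posSemidef.sqrt with hR
  have hRH : R.IsHermitian := sqrt_herm hA
  have hRR : R * R = A := hA.posSemidef.sqrt_mul_self
  have hRd : IsUnit R.det := sqrt_det hA
  have hRi1 : R * R⁻¹ = 1 := mul_nonsing_inv R hRd
  have hRi2 : R⁻¹ * R = 1 := nonsing_inv_mul R hRd
  set S := R⁻¹ * G * R⁻¹ with hS
  have hSH : S.IsHermitian := by
    unfold Matrix.IsHermitian
    simp [hS, conjTranspose_mul, Matrix.mul_assoc, hRH.inv.eq, hG.isHermitian.eq]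
  have e1 : R * S * R = G := by
    rw [hS, show R * (R⁻¹ * G * R⁻¹) * R = (R * R⁻¹) * G * (R⁻¹ * R) by noncomm_ring,
      hRi1, hRi2, one_mul, mul_one]
  have e0 : S * S = R⁻¹ * B * R⁻¹ := by
    rw [← hric, ← sqrt_inv_mul_sqrt_inv hA, ← hR, hS]
    noncomm_ring
  have e2 : R * (S * S) * R = B := by
    rw [e0, show R * (R⁻¹ * B * R⁻¹) * R = (R * R⁻¹) * B * (R⁻¹ * R) by noncomm_ring,
      hRi1, hRi2, one_mul, mul_one]
  have expand : R * ((1 - S) * (1 - S)) * R = A - G - G + B := by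
    have h1 : R * ((1 - S) * (1 - S)) * R
        = R * R - R * S * R - R * S * R + R * (S * S) * R := by noncomm_ring
    rw [h1, hRR, e1, e2]
  have key : (2 : ℂ)⁻¹ • (A + B) - G = R * ((2 : ℂ)⁻¹ • ((1 - S) * (1 - S))) * R := by
    rw [Matrix.mul_smul, Matrix.smul_mul, expand]
    module
  rw [key, half_eq]
  refine conj_psd (smul_psd (by norm_num) ?_) hRH
  have h2 : ((1 : Matrix (Fin n) (Fin n) ℂ) - S)ᴴ = 1 - S := by
    rw [conjTranspose_sub, conjTranspose_one, hSH.eq]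
  rw [show (1 - S) * (1 - S) = (1 - S)ᴴ * (1 - S) by rw [h2]]
  exact posSemidef_conjTranspose_mul_self _

/-- Inversion is antitone on positive definite matrices. -/
lemma inv_antitone (hX : X.PosDef) (hY : Y.PosDef) (h : (X - Y).PosSemidef) :
    (Y⁻¹ - X⁻¹).PosSemidef := by
  set T := (hY.posSemidef.sqrt)⁻¹ with hT
  have hTH : T.IsHermitian := (sqrt_herm hY).inv
  have hTd : IsUnit T.det := by
    rw [hT, det_nonsing_inv, Ring.inverse_eq_inv]
    exact (sqrt_det hY).inv
  have hTT : T * T = Y⁻¹ := sqrt_inv_mul_sqrt_inv hY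
  have hTYT : T * Y * T = 1 := sqrt_inv_conj_one hY
  set W := T * X * T with hW
  have hWpd : W.PosDef := conj_pd hX hTH hTd
  have hW1 : (W - 1).PosSemidef := by
    have : W - 1 = T * (X - Y) * T := by
      rw [Matrix.mul_sub, Matrix.sub_mul, hW, hTYT]
    rw [this]
    exact conj_psd h hTH
  set U := (hWpd.posSemidef.sqrt)⁻¹ with hU
  have hUH : U.IsHermitian := (sqrt_herm hWpd).inv
  have hUU : U * U = W⁻¹ := sqrt_inv_mul_sqrt_inv hWpd
  have hUWU : U * W * U = 1 := sqrt_inv_conj_one hWpd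
  have step1 : ((1 : Matrix (Fin n) (Fin n) ℂ) - W⁻¹).PosSemidef := by
    have : (1 : Matrix (Fin n) (Fin n) ℂ) - W⁻¹ = U * (W - 1) * U := by
      rw [Matrix.mul_sub, Matrix.sub_mul, hUWU, Matrix.mul_one, hUU]
    rw [this]
    exact conj_psd hW1 hUH
  have hTinv : T⁻¹ = hY.posSemidef.sqrt := by
    rw [hT, nonsing_inv_nonsing_inv _ (sqrt_det hY)]
  have hTi1 : T * T⁻¹ = 1 := by
    rw [hTinv, hT, nonsing_inv_mul _ (sqrt_det hY)]
  have hTi2 : T⁻¹ * T = 1 := by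
    rw [hTinv, hT, mul_nonsing_inv _ (sqrt_det hY)]
  have final : Y⁻¹ - X⁻¹ = T * (1 - W⁻¹) * T := by
    have hWinv : W⁻¹ = T⁻¹ * X⁻¹ * T⁻¹ := by
      rw [hW, Matrix.mul_inv_rev, Matrix.mul_inv_rev, Matrix.mul_assoc]
    rw [Matrix.mul_sub, Matrix.sub_mul, Matrix.mul_one, hTT, hWinv,
      show T * (T⁻¹ * X⁻¹ * T⁻¹) * T = (T * T⁻¹) * X⁻¹ * (T⁻¹ * T) by noncomm_ring,
      hTi1, hTi2, one_mul, mul_one]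
  rw [final]
  exact conj_psd step1 hTH

lemma am_pd (hA : A.PosDef) (hB : B.PosDef) : ((2 : ℂ)⁻¹ • (A + B)).PosDef := by
  rw [half_eq]; exact smul_pd (by norm_num) (hA.add hB)

lemma hm_pd (hA : A.PosDef) (hB : B.PosDef) : ((2 : ℂ) • (A⁻¹ + B⁻¹)⁻¹).PosDef := by
  rw [two_eq]; exact smul_pd (by norm_num) (hA.inv.add hB.inv).inv

lemma half_smul_inv (hd : IsUnit X.det) : ((2 : ℂ)⁻¹ • X)⁻¹ = (2 : ℂ) • X⁻¹ := by
  apply inv_eq_right_inv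
  rw [Matrix.smul_mul, Matrix.mul_smul, smul_smul, mul_nonsing_inv _ hd]
  norm_num

lemma ric_inv (hA : A.PosDef) (hG : G.PosDef) (hric : G * A⁻¹ * G = B) :
    G⁻¹ * A * G⁻¹ = B⁻¹ := by
  rw [← hric, Matrix.mul_inv_rev, Matrix.mul_inv_rev,
    nonsing_inv_nonsing_inv A (det_unit hA), Matrix.mul_assoc]

lemma ric_step (hA : A.PosDef) (hB : B.PosDef) (hG : G.PosDef)
    (hric : G * A⁻¹ * G = B) :
    G * ((2 : ℂ)⁻¹ • (A + B))⁻¹ * G = (2 : ℂ) • (A⁻¹ + B⁻¹)⁻¹ := by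
  have hGd := det_unit hG
  have hGi1 : G * G⁻¹ = 1 := mul_nonsing_inv G hGd
  have hGi2 : G⁻¹ * G = 1 := nonsing_inv_mul G hGd
  have h1 : A⁻¹ * G = G⁻¹ * B := by
    calc A⁻¹ * G = G⁻¹ * (G * A⁻¹ * G) := by
          rw [show G⁻¹ * (G * A⁻¹ * G) = (G⁻¹ * G) * (A⁻¹ * G) by noncomm_ring, hGi2, one_mul]
      _ = G⁻¹ * B := by rw [hric]
  have h2 : B⁻¹ * G = G⁻¹ * A := by
    rw [← ric_inv hA hG hric,
      show G⁻¹ * A * G⁻¹ * G = G⁻¹ * A * (G⁻¹ * G) by noncomm_ring, hGi2, mul_one]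
  have hAG : (A⁻¹ + B⁻¹) * G = G⁻¹ * (A + B) := by
    rw [Matrix.add_mul, h1, h2, Matrix.mul_add, add_comm]
  have hABd : IsUnit (A + B).det := det_unit (hA.add hB)
  have main : G * (A + B)⁻¹ * G = (A⁻¹ + B⁻¹)⁻¹ := by
    symm
    apply inv_eq_right_inv
    calc (A⁻¹ + B⁻¹) * (G * (A + B)⁻¹ * G)
        = ((A⁻¹ + B⁻¹) * G) * (A + B)⁻¹ * G := by noncomm_ring
      _ = G⁻¹ * ((A + B) * (A + B)⁻¹) * G := by rw [hAG]; noncomm_ring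
      _ = 1 := by rw [mul_nonsing_inv _ hABd, Matrix.mul_one, hGi2]
  rw [half_smul_inv hABd, Matrix.mul_smul, Matrix.smul_mul, main]

lemma sub_hm_psd (hA : A.PosDef) (hB : B.PosDef) (hG : G.PosDef)
    (hric : G * A⁻¹ * G = B) : (G - (2 : ℂ) • (A⁻¹ + B⁻¹)⁻¹).PosSemidef := by
  have hric' : G⁻¹ * (A⁻¹)⁻¹ * G⁻¹ = B⁻¹ := by
    rw [nonsing_inv_nonsing_inv A (det_unit hA)]
    exact ric_inv hA hG hric
  have h1 := am_sub_psd hA.inv hB.inv hG.inv hric'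
  have hS : ((2 : ℂ)⁻¹ • (A⁻¹ + B⁻¹)).PosDef := am_pd hA.inv hB.inv
  have h2 := inv_antitone hS hG.inv h1
  rwa [nonsing_inv_nonsing_inv G (det_unit hG),
    half_smul_inv (det_unit (hA.inv.add hB.inv))] at h2

lemma hm_ge (hA : A.PosDef) (hB : B.PosDef) (hd : (A - B).PosSemidef) :
    ((2 : ℂ) • (A⁻¹ + B⁻¹)⁻¹ - B).PosSemidef := by
  have h1 : (B⁻¹ - A⁻¹).PosSemidef := inv_antitone hA hB hd
  have h2 : (B⁻¹ - (2 : ℂ)⁻¹ • (A⁻¹ + B⁻¹)).PosSemidef := by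
    have he : B⁻¹ - (2 : ℂ)⁻¹ • (A⁻¹ + B⁻¹) = (2 : ℂ)⁻¹ • (B⁻¹ - A⁻¹) := by module
    rw [he, half_eq]
    exact smul_psd (by norm_num) h1
  have h3 := inv_antitone hB.inv (am_pd hA.inv hB.inv) h2
  rwa [nonsing_inv_nonsing_inv B (det_unit hB),
    half_smul_inv (det_unit (hA.inv.add hB.inv))] at h3

end AveragingAux

namespace AveragingAux

/-- The geometric mean is positive definite. -/
lemma geomMean_pd {n : ℕ} {A B : Matrix (Fin n) (Fin n) ℂ} (hA : A.PosDef) (hB : B.PosDef) :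
    (geomMean hA hB).PosDef := by
  have hCpd : ((hA.posSemidef.sqrt)⁻¹ * B * (hA.posSemidef.sqrt)⁻¹).PosDef := by
    refine conj_pd hB (sqrt_herm hA).inv ?_
    rw [det_nonsing_inv, Ring.inverse_eq_inv]
    exact (sqrt_det hA).inv
  have hsCpd : (geomMean_aux hA hB).sqrt.PosDef := by
    refine pd_of_psd (geomMean_aux hA hB).posSemidef_sqrt (isUnit_iff_ne_zero.mpr fun h0 => ?_)
    have h : (geomMean_aux hA hB).sqrt.det * (geomMean_aux hA hB).sqrt.det
        = ((hA.posSemidef.sqrt)⁻¹ * B * (hA.posSemidef.sqrt)⁻¹).det := by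
      rw [← det_mul, (geomMean_aux hA hB).sqrt_mul_self]
    exact hCpd.det_pos.ne' (by rw [← h, h0, mul_zero])
  exact conj_pd hsCpd (sqrt_herm hA) (sqrt_det hA)

/-- The geometric mean satisfies the Riccati equation `G A⁻¹ G = B`. -/
lemma geomMean_ric {n : ℕ} {A B : Matrix (Fin n) (Fin n) ℂ} (hA : A.PosDef) (hB : B.PosDef) :
    geomMean hA hB * A⁻¹ * geomMean hA hB = B := by
  set R := hA.posSemidef.sqrt with hR
  set S := (geomMean_aux hA hB).sqrt with hS
  have hRi1 : R * R⁻¹ = 1 := mul_nonsing_inv R (sqrt_det hA)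
  have hRi2 : R⁻¹ * R = 1 := nonsing_inv_mul R (sqrt_det hA)
  have hSS : S * S = R⁻¹ * B * R⁻¹ := (geomMean_aux hA hB).sqrt_mul_self
  show (R * S * R) * A⁻¹ * (R * S * R) = B
  rw [← sqrt_inv_mul_sqrt_inv hA, ← hR,
    show (R * S * R) * (R⁻¹ * R⁻¹) * (R * S * R)
      = R * (S * ((R * R⁻¹) * (R⁻¹ * R)) * S) * R by noncomm_ring,
    hRi1, hRi2, one_mul, Matrix.mul_one, hSS,
    show R * (R⁻¹ * B * R⁻¹) * R = (R * R⁻¹) * B * (R⁻¹ * R) by noncomm_ring,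
    hRi1, hRi2, one_mul, Matrix.mul_one]

end AveragingAux

open AveragingAux in
/-- Monotonic convergence of the averaging iteration in the Loewner order:
`A_k ≽ A_{k+1} ≽ A # B ≽ B_{k+1} ≽ B_k` for `k ≥ 1`. -/
theorem averaging_monotone {n : ℕ} {A B : Matrix (Fin n) (Fin n) ℂ}
    (hA : A.PosDef) (hB : B.PosDef)
    (As Bs : ℕ → Matrix (Fin n) (Fin n) ℂ)
    (hA0 : As 0 = A) (hB0 : Bs 0 = B)
    (hArec : ∀ k, As (k + 1) = (2 : ℂ)⁻¹ • (As k + Bs k))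
    (hBrec : ∀ k, Bs (k + 1) = (2 : ℂ) • ((As k)⁻¹ + (Bs k)⁻¹)⁻¹) :
    ∀ k, 1 ≤ k →
      (As k - As (k + 1)).PosSemidef ∧
      (As (k + 1) - geomMean hA hB).PosSemidef ∧
      (geomMean hA hB - Bs (k + 1)).PosSemidef ∧
      (Bs (k + 1) - Bs k).PosSemidef := by
  set G := geomMean hA hB with hGdef
  have hGpd : G.PosDef := geomMean_pd hA hB
  have inv : ∀ k, (As k).PosDef ∧ (Bs k).PosDef ∧ G * (As k)⁻¹ * G = Bs k := by
    intro k
    induction k with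
    | zero => rw [hA0, hB0]; exact ⟨hA, hB, geomMean_ric hA hB⟩
    | succ k ih =>
      obtain ⟨hAk, hBk, hrk⟩ := ih
      rw [hArec, hBrec]
      exact ⟨am_pd hAk hBk, hm_pd hAk hBk, ric_step hAk hBk hGpd hrk⟩
  have main2 : ∀ k, (As (k + 1) - G).PosSemidef ∧ (G - Bs (k + 1)).PosSemidef := by
    intro k
    obtain ⟨hAk, hBk, hrk⟩ := inv k
    refine ⟨?_, ?_⟩
    · rw [hArec]; exact am_sub_psd hAk hBk hGpd hrk
    · rw [hBrec]; exact sub_hm_psd hAk hBk hGpd hrk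
  intro k hk
  obtain ⟨j, rfl⟩ : ∃ j, k = j + 1 := ⟨k - 1, by omega⟩
  obtain ⟨h2j, h3j⟩ := main2 j
  obtain ⟨hAk, hBk, -⟩ := inv (j + 1)
  have hAB : (As (j + 1) - Bs (j + 1)).PosSemidef := by
    have h := h2j.add h3j
    rwa [sub_add_sub_cancel] at h
  refine ⟨?_, (main2 (j + 1)).1, (main2 (j + 1)).2, ?_⟩
  · rw [hArec (j + 1)]
    have he : As (j + 1) - (2 : ℂ)⁻¹ • (As (j + 1) + Bs (j + 1))
        = (2 : ℂ)⁻¹ • (As (j + 1) - Bs (j + 1)) := by module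
    rw [he, half_eq]
    exact smul_psd (by norm_num) hAB
  · rw [hBrec (j + 1)]
    exact hm_ge hAk hBk hAB
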